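/- For every complex number z, the sequence n ↦ ((1 + z/(2n)) / (1 − z/(2n)))^n − exp(z) is O(1/n²) as n → ∞ (asymptotically along the natural numbers). -/

import Mathlib

open Complex Filter Asymptotics

lemma log_ratio_cubic {w : ℂ} (hw : ‖w‖ ≤ 1/2) :
    ‖Complex.log (1+w) - Complex.log (1-w) - 2*w‖ ≤ 3 * ‖w‖^3 := by
  set s : Set ℂ := Metric.closedBall 0 ‖w‖ with hs
  have hconv : Convex ℝ s := convex_closedBall _ _
  have hws : w ∈ s := by simp [hs]
  have h0s : (0:ℂ) ∈ s := by simp [hs]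
  have hxw : ∀ x ∈ s, ‖x‖ ≤ ‖w‖ := by
    intro x hx
    simpa [hs, Complex.dist_eq] using hx
  have hx2 : ∀ x ∈ s, ‖x‖ ≤ 1/2 := fun x hx => le_trans (hxw x hx) hw
  -- nonvanishing and slit plane facts
  have h1p : ∀ x ∈ s, (1 + x) ∈ Complex.slitPlane := by
    intro x hx
    refine Complex.mem_slitPlane_iff.mpr (Or.inl ?_)
    have h1 : |x.re| ≤ ‖x‖ := Complex.abs_re_le_norm x
    have h2 := hx2 x hx
    simp only [Complex.add_re, Complex.one_re]
    cases' abs_le.mp h1 with hl hr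
    linarith
  have h1m : ∀ x ∈ s, (1 - x) ∈ Complex.slitPlane := by
    intro x hx
    refine Complex.mem_slitPlane_iff.mpr (Or.inl ?_)
    have h1 : |x.re| ≤ ‖x‖ := Complex.abs_re_le_norm x
    have h2 := hx2 x hx
    simp only [Complex.sub_re, Complex.one_re]
    cases' abs_le.mp h1 with hl hr
    linarith
  have hne1p : ∀ x ∈ s, (1:ℂ) + x ≠ 0 := fun x hx =>
    Complex.slitPlane_ne_zero (h1p x hx)
  have hne1m : ∀ x ∈ s, (1:ℂ) - x ≠ 0 := fun x hx =>
    Complex.slitPlane_ne_zero (h1m x hx)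
  -- derivative
  have hderiv : ∀ x ∈ s,
      HasDerivWithinAt (fun x : ℂ => Complex.log (1+x) - Complex.log (1-x) - 2*x)
        ((1+x)⁻¹ + (1-x)⁻¹ - 2) s x := by
    intro x hx
    have hA : HasDerivAt (fun x : ℂ => Complex.log (1+x)) (1+x)⁻¹ x :=
      (Complex.hasDerivAt_log (h1p x hx)).comp_const_add 1 x
    have hsub : HasDerivAt (fun x : ℂ => 1 - x) (-1 : ℂ) x := by
      simpa using (hasDerivAt_id x).const_sub 1
    have hB : HasDerivAt (fun x : ℂ => Complex.log (1-x)) ((1-x)⁻¹ * (-1)) x :=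
      HasDerivAt.comp x (Complex.hasDerivAt_log (h1m x hx)) hsub
    have hC : HasDerivAt (fun x : ℂ => 2*x) (2 : ℂ) x := by
      simpa using (hasDerivAt_id x).const_mul (2 : ℂ)
    have := (hA.sub hB).sub hC
    have heq : (1+x)⁻¹ - (1-x)⁻¹ * (-1) - 2 = (1+x)⁻¹ + (1-x)⁻¹ - 2 := by ring
    rw [heq] at this
    exact this.hasDerivWithinAt
  -- bound on derivative
  have hbound : ∀ x ∈ s, ‖(1+x)⁻¹ + (1-x)⁻¹ - 2‖ ≤ 3 * ‖w‖^2 := by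
    intro x hx
    have h1 := hne1p x hx
    have h2 := hne1m x hx
    have heq : (1+x)⁻¹ + (1-x)⁻¹ - 2 = 2*x^2 / ((1+x)*(1-x)) := by
      field_simp
      ring
    have hprod : (1+x)*(1-x) = 1 - x^2 := by ring
    rw [heq, hprod]
    have hxle := hx2 x hx
    have hx2le : ‖x^2‖ ≤ 1/4 := by
      rw [norm_pow]
      nlinarith [norm_nonneg x]
    have hden : (3/4 : ℝ) ≤ ‖1 - x^2‖ := by
      have := norm_sub_norm_le (1 : ℂ) (x^2)
      simp only [norm_one] at this
      linarith
    have hdenpos : (0:ℝ) < ‖1 - x^2‖ := by linarith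
    rw [norm_div, div_le_iff₀ hdenpos]
    have hnum : ‖2*x^2‖ = 2 * ‖x‖^2 := by
      rw [norm_mul, norm_pow]
      norm_num
    rw [hnum]
    have hxw' := hxw x hx
    nlinarith [norm_nonneg x, norm_nonneg w]
  have := hconv.norm_image_sub_le_of_norm_hasDerivWithin_le hderiv hbound hws h0s
  simp only [Complex.log_one, add_zero, sub_zero, mul_zero, zero_sub, norm_neg] at this
  calc ‖Complex.log (1+w) - Complex.log (1-w) - 2*w‖
      ≤ 3 * ‖w‖^2 * ‖w‖ := by
        have h0 : Complex.log (1 + 0) - Complex.log (1 - 0) - 2*0 = 0 := by simp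
        have := hconv.norm_image_sub_le_of_norm_hasDerivWithin_le hderiv hbound h0s hws
        rw [h0, sub_zero, sub_zero] at this
        exact this
    _ = 3 * ‖w‖^3 := by ring

theorem pade_exponential_approximation (z : ℂ) :
    (fun n : ℕ => ((1 + z / (2 * n)) / (1 - z / (2 * n))) ^ n - Complex.exp z)
      =O[atTop] (fun n : ℕ => (1 : ℝ) / (n : ℝ) ^ 2) := by
  rw [isBigO_iff]
  refine ⟨‖Complex.exp z‖ * ‖z‖^3, ?_⟩
  have hev : ∀ᶠ n : ℕ in atTop, max 1 (max ‖z‖ (‖z‖^3)) ≤ (n:ℝ) :=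
    tendsto_natCast_atTop_atTop.eventually_ge_atTop _
  filter_upwards [hev] with n hn
  simp only [max_le_iff] at hn
  obtain ⟨hn1, hnz, hnz3⟩ : (1:ℝ) ≤ n ∧ ‖z‖ ≤ n ∧ ‖z‖^3 ≤ n := ⟨hn.1, hn.2.1, hn.2.2⟩
  have hn0 : (0:ℝ) < n := lt_of_lt_of_le one_pos hn1
  have hnne : n ≠ 0 := by
    intro h
    rw [h] at hn1
    norm_num at hn1
  have hnC : (n:ℂ) ≠ 0 := Nat.cast_ne_zero.mpr hnne
  set w : ℂ := z / (2 * (n:ℂ)) with hwdef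
  have hwn : ‖w‖ = ‖z‖ / (2*(n:ℝ)) := by
    rw [hwdef, norm_div, norm_mul, Complex.norm_natCast]
    norm_num
  have hw : ‖w‖ ≤ 1/2 := by
    rw [hwn, div_le_iff₀ (by positivity)]
    linarith
  have h1p : (1:ℂ) + w ≠ 0 := by
    intro h
    have : ‖(1:ℂ)‖ - ‖-w‖ ≤ ‖1 - (-w)‖ := norm_sub_norm_le _ _
    rw [sub_neg_eq_add, h] at this
    simp only [norm_one, norm_neg, norm_zero] at this
    linarith
  have h1m : (1:ℂ) - w ≠ 0 := by
    intro h
    have : ‖(1:ℂ)‖ - ‖w‖ ≤ ‖1 - w‖ := norm_sub_norm_le _ _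
    rw [h] at this
    simp only [norm_one, norm_zero] at this
    linarith
  set u : ℂ := (n:ℂ) * (Complex.log (1+w) - Complex.log (1-w)) - z with hu
  have hrw : ((1 + w) / (1 - w)) ^ n - Complex.exp z
      = Complex.exp z * (Complex.exp u - 1) := by
    rw [mul_sub, mul_one, ← Complex.exp_add]
    congr 1
    have : z + u = (n:ℂ) * Complex.log (1+w) - (n:ℂ) * Complex.log (1-w) := by
      rw [hu]; ring
    rw [this, Complex.exp_sub, Complex.exp_nat_mul, Complex.exp_nat_mul,
      Complex.exp_log h1p, Complex.exp_log h1m, div_pow]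
  have hzu : u = (n:ℂ) * (Complex.log (1+w) - Complex.log (1-w) - 2*w) := by
    rw [hu, hwdef]
    field_simp
  have hub : ‖u‖ ≤ (3/8) * ‖z‖^3 / (n:ℝ)^2 := by
    rw [hzu, norm_mul, Complex.norm_natCast]
    have hkey := log_ratio_cubic hw
    have hstep : (n:ℝ) * ‖Complex.log (1+w) - Complex.log (1-w) - 2*w‖
        ≤ (n:ℝ) * (3 * ‖w‖^3) := by
      apply mul_le_mul_of_nonneg_left hkey (le_of_lt hn0)
    have heq : (n:ℝ) * (3 * ‖w‖^3) = (3/8) * ‖z‖^3 / (n:ℝ)^2 := by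
      rw [hwn]
      field_simp
      ring
    linarith
  have hu1 : ‖u‖ ≤ 1 := by
    have hn2 : (n:ℝ) ≤ (n:ℝ)^2 := by nlinarith
    have : (3/8) * ‖z‖^3 / (n:ℝ)^2 ≤ 3/8 := by
      rw [div_le_iff₀ (by positivity)]
      nlinarith
    linarith
  have hexp : ‖Complex.exp u - 1‖ ≤ 2 * ‖u‖ := by
    have := Complex.norm_exp_sub_one_le (x := u) hu1
    exact this
  rw [hrw, norm_mul]
  have hnormr : ‖(1:ℝ) / (n:ℝ)^2‖ = 1 / (n:ℝ)^2 := by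
    rw [Real.norm_eq_abs, abs_of_pos (by positivity)]
  rw [hnormr]
  calc ‖Complex.exp z‖ * ‖Complex.exp u - 1‖
      ≤ ‖Complex.exp z‖ * (2 * ‖u‖) := by
        apply mul_le_mul_of_nonneg_left hexp (norm_nonneg _)
    _ ≤ ‖Complex.exp z‖ * (2 * ((3/8) * ‖z‖^3 / (n:ℝ)^2)) := by
        have : (0:ℝ) ≤ ‖Complex.exp z‖ := norm_nonneg _
        nlinarith
    _ ≤ ‖Complex.exp z‖ * ‖z‖^3 * (1 / (n:ℝ)^2) := by
        have h1 : (0:ℝ) ≤ ‖Complex.exp z‖ := norm_nonneg _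
        have h2 : (0:ℝ) ≤ ‖z‖^3 := by positivity
        have h3 : (0:ℝ) < (n:ℝ)^2 := by positivity
        have heq : ‖Complex.exp z‖ * (2 * ((3/8) * ‖z‖^3 / (n:ℝ)^2))
            = (3/4) * (‖Complex.exp z‖ * ‖z‖^3) / (n:ℝ)^2 := by ring
        rw [heq, mul_one_div, div_le_div_iff₀ h3 h3]
        nlinarith [mul_nonneg (mul_nonneg h1 h2) (le_of_lt h3)]
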